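/- For every nonnegative integer n, the polynomial Fₙ(x) := ₂F₁(-n, 1/2; 1; x) is monotone decreasing on [0,1], and hence (1/2)ₙ/n! ≤ Fₙ(x) ≤ 1 for all x ∈ [0,1]. -/

import Mathlib

open scoped Nat

/-- Pochhammer symbol `(a)_j` for real `a`. -/
noncomputable def poch (a : ℝ) (j : ℕ) : ℝ := (ascPochhammer ℝ j).eval a

/-- The terminating hypergeometric polynomial `Fₙ(x) = ₂F₁(-n, 1/2; 1; x)`. -/
noncomputable def F (n : ℕ) (x : ℝ) : ℝ :=
  ∑ j ∈ Finset.range (n + 1),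
    poch (-(n : ℝ)) j * poch (1/2) j / ((j ! : ℝ) ^ 2) * x ^ j

open Real

lemma poch_succ (a : ℝ) (j : ℕ) : poch a (j + 1) = poch a j * (a + j) := by
  simp [poch, ascPochhammer_succ_eval]

lemma poch_zero (a : ℝ) : poch a 0 = 1 := by simp [poch]

lemma prod_eq_poch_div (j : ℕ) :
    (∏ i ∈ Finset.range j, (2 * (i : ℝ) + 1) / (2 * i + 2)) = poch (1/2) j / (j ! : ℝ) := by
  induction j with
  | zero => simp [poch_zero]
  | succ k ih =>
      rw [Finset.prod_range_succ, ih, poch_succ, Nat.factorial_succ]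
      have hk : (k ! : ℝ) ≠ 0 := Nat.cast_ne_zero.2 (Nat.factorial_ne_zero k)
      have h2 : (2 * (k : ℝ) + 2) ≠ 0 := by positivity
      have h3 : ((k : ℝ) + 1) ≠ 0 := by positivity
      push_cast
      field_simp
      ring

lemma poch_neg_nat (n j : ℕ) (hj : j ≤ n) :
    poch (-(n : ℝ)) j = (-1) ^ j * (n.descFactorial j : ℝ) := by
  induction j with
  | zero => simp [poch_zero]
  | succ k ih =>
      have hk : k < n := hj
      rw [poch_succ, ih hk.le, Nat.descFactorial_succ]
      have : (-(n : ℝ) + k) = -((n - k : ℕ) : ℝ) := by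
        rw [Nat.cast_sub hk.le]; ring
      rw [this]
      push_cast
      ring

/-- coefficient simplification -/
lemma coeff_eq (n j : ℕ) (hj : j ≤ n) :
    poch (-(n : ℝ)) j * poch (1/2) j / ((j ! : ℝ) ^ 2)
      = (-1) ^ j * (n.choose j : ℝ) * (poch (1/2) j / (j ! : ℝ)) := by
  rw [poch_neg_nat n j hj, Nat.descFactorial_eq_factorial_mul_choose]
  have hk : (j ! : ℝ) ≠ 0 := Nat.cast_ne_zero.2 (Nat.factorial_ne_zero j)
  push_cast
  field_simp

lemma F_repr (n : ℕ) (x : ℝ) :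
    F n x = (1/π) * ∫ θ in (0:ℝ)..π, (1 - x * sin θ ^ 2) ^ n := by
  have hexp : ∀ θ : ℝ, (1 - x * sin θ ^ 2) ^ n
      = ∑ j ∈ Finset.range (n + 1), (-x) ^ j * sin θ ^ (2 * j) * (n.choose j : ℝ) := by
    intro θ
    have := add_pow (-(x * sin θ ^ 2)) 1 n
    simp only [one_pow, mul_one] at this
    rw [show (1 : ℝ) - x * sin θ ^ 2 = -(x * sin θ ^ 2) + 1 by ring, this]
    refine Finset.sum_congr rfl fun j _ => ?_
    rw [show -(x * sin θ ^ 2) = (-x) * sin θ ^ 2 by ring, mul_pow, ← pow_mul]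
  have hInt : ∀ j : ℕ, IntervalIntegrable
      (fun θ : ℝ => (-x) ^ j * sin θ ^ (2 * j) * (n.choose j : ℝ))
      MeasureTheory.volume 0 π := fun j => by
    apply Continuous.intervalIntegrable; fun_prop
  calc F n x = ∑ j ∈ Finset.range (n + 1),
        (-1) ^ j * (n.choose j : ℝ) * (poch (1/2) j / (j ! : ℝ)) * x ^ j := by
        exact Finset.sum_congr rfl fun j hj => by
          rw [coeff_eq n j (Nat.lt_succ_iff.mp (Finset.mem_range.mp hj))]
    _ = (1/π) * ∑ j ∈ Finset.range (n + 1),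
        ∫ θ in (0:ℝ)..π, (-x) ^ j * sin θ ^ (2 * j) * (n.choose j : ℝ) := by
        rw [Finset.mul_sum]
        refine Finset.sum_congr rfl fun j _ => ?_
        rw [intervalIntegral.integral_mul_const, intervalIntegral.integral_const_mul,
          integral_sin_pow_even, prod_eq_poch_div]
        have hπ : π ≠ 0 := pi_ne_zero
        field_simp
        ring
    _ = (1/π) * ∫ θ in (0:ℝ)..π, (1 - x * sin θ ^ 2) ^ n := by
        rw [← intervalIntegral.integral_finset_sum (fun j _ => hInt j)]
        congr 1
        exact intervalIntegral.integral_congr fun θ _ => (hexp θ).symm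

lemma integral_cos_pow_even_pi (n : ℕ) :
    (∫ x in (0:ℝ)..π, cos x ^ (2 * n)) = ∫ x in (0:ℝ)..π, sin x ^ (2 * n) := by
  have hInt : ∀ a b : ℝ, IntervalIntegrable (fun x => cos x ^ (2*n)) MeasureTheory.volume a b :=
    fun a b => (continuous_cos.pow _).intervalIntegrable a b
  have h1 : (∫ x in (-(π/2):ℝ)..(π/2), cos x ^ (2 * n)) = ∫ x in (0:ℝ)..π, sin x ^ (2 * n) := by
    have h := intervalIntegral.integral_comp_add_right (a := -(π/2)) (b := π/2)
      (fun x => sin x ^ (2 * n)) (π/2)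
    have : (∫ x in (-(π/2):ℝ)..(π/2), sin (x + π/2) ^ (2 * n))
        = ∫ x in (-(π/2):ℝ)..(π/2), cos x ^ (2 * n) :=
      intervalIntegral.integral_congr fun x _ => by rw [sin_add_pi_div_two]
    rw [this] at h
    rw [h]; norm_num
  have heven : (∫ x in (-(π/2):ℝ)..(0:ℝ), cos x ^ (2 * n)) = ∫ x in (0:ℝ)..(π/2), cos x ^ (2 * n) := by
    have h := intervalIntegral.integral_comp_neg (a := (0:ℝ)) (b := π/2) (fun x => cos x ^ (2 * n))
    simp only [cos_neg, neg_zero] at h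
    rw [← h]
  have hsecond : (∫ x in (π/2:ℝ)..π, cos x ^ (2 * n)) = ∫ x in (0:ℝ)..(π/2), cos x ^ (2 * n) := by
    have h := intervalIntegral.integral_comp_add_right (a := -(π/2)) (b := (0:ℝ))
      (fun x => cos x ^ (2 * n)) π
    have h2 : (∫ x in (-(π/2):ℝ)..(0:ℝ), cos (x + π) ^ (2 * n))
        = ∫ x in (-(π/2):ℝ)..(0:ℝ), cos x ^ (2 * n) :=
      intervalIntegral.integral_congr fun x _ => by
        rw [cos_add_pi, Even.neg_pow (even_two_mul n)]
    rw [h2, show -(π/2)+π = π/2 by ring, show (0:ℝ)+π = π by ring] at h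
    rw [← h, heven]
  have split1 : (∫ x in (0:ℝ)..π, cos x ^ (2*n))
      = (∫ x in (0:ℝ)..(π/2), cos x ^ (2*n)) + ∫ x in (π/2:ℝ)..π, cos x ^ (2*n) :=
    (intervalIntegral.integral_add_adjacent_intervals (hInt 0 (π/2)) (hInt (π/2) π)).symm
  have split2 : (∫ x in (-(π/2):ℝ)..(π/2), cos x ^ (2*n))
      = (∫ x in (-(π/2):ℝ)..(0:ℝ), cos x ^ (2*n)) + ∫ x in (0:ℝ)..(π/2), cos x ^ (2*n) :=
    (intervalIntegral.integral_add_adjacent_intervals (hInt _ _) (hInt _ _)).symm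
  rw [split1, hsecond, ← h1, split2, heven]

lemma F_zero (n : ℕ) : F n 0 = 1 := by
  rw [F, Finset.sum_eq_single 0]
  · simp [poch_zero]
  · intro j _ hj; simp [zero_pow hj]
  · intro h; exact absurd (Finset.mem_range.mpr n.succ_pos) h

lemma F_one (n : ℕ) : F n 1 = poch (1/2) n / (n ! : ℝ) := by
  rw [F_repr]
  have : (∫ θ in (0:ℝ)..π, (1 - 1 * sin θ ^ 2) ^ n) = ∫ θ in (0:ℝ)..π, cos θ ^ (2 * n) := by
    refine intervalIntegral.integral_congr fun θ _ => ?_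
    rw [pow_mul, cos_sq']; ring_nf
  rw [this, integral_cos_pow_even_pi, integral_sin_pow_even, prod_eq_poch_div]
  field_simp

lemma F_anti (n : ℕ) : AntitoneOn (F n) (Set.Icc (0:ℝ) 1) := by
  intro x hx y hy hxy
  rw [F_repr, F_repr]
  have hπ : (0:ℝ) ≤ 1/π := by positivity
  refine mul_le_mul_of_nonneg_left ?_ hπ
  refine intervalIntegral.integral_mono_on pi_pos.le
    (Continuous.intervalIntegrable (by fun_prop) _ _)
    (Continuous.intervalIntegrable (by fun_prop) _ _) fun θ _ => ?_
  have hs0 : (0:ℝ) ≤ sin θ ^ 2 := sq_nonneg _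
  have hs1 : sin θ ^ 2 ≤ 1 := by
    rw [← Real.sin_sq_add_cos_sq θ]; nlinarith [sq_nonneg (cos θ)]
  have h0 : (0:ℝ) ≤ 1 - y * sin θ ^ 2 := by nlinarith [hy.1, hy.2]
  have hle : 1 - y * sin θ ^ 2 ≤ 1 - x * sin θ ^ 2 := by nlinarith
  exact pow_le_pow_left₀ h0 hle n

theorem F_antitone_and_bounds (n : ℕ) :
    AntitoneOn (F n) (Set.Icc (0:ℝ) 1) ∧
    ∀ x ∈ Set.Icc (0:ℝ) 1, poch (1/2) n / (n ! : ℝ) ≤ F n x ∧ F n x ≤ 1 := by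
  refine ⟨F_anti n, fun x hx => ⟨?_, ?_⟩⟩
  · rw [← F_one n]
    exact F_anti n hx (Set.mem_Icc.mpr ⟨zero_le_one, le_refl 1⟩) hx.2
  · rw [← F_zero n]
    exact F_anti n (Set.mem_Icc.mpr ⟨le_refl 0, zero_le_one⟩) hx hx.1
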